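/- Let P be a flag-symmetric finite ranked poset of rank n with an RS-labeling Λ. Then the flag symmetric function satisfies F_P = h_ν for some partition ν of n, and P is isomorphic to the product of chains C_{ν_1+1} × C_{ν_2+1} × ···. -/

import Mathlib

open MvPolynomial

section AbstractPoset

variable {P : Type*} [PartialOrder P] [BoundedOrder P]

/-- A maximal chain of length `n` in a bounded poset `P`: a saturated chain
`⊥ = c 0 ⋖ c 1 ⋖ ⋯ ⋖ c n = ⊤`. -/
def IsMaxChainOf (n : ℕ) (c : Fin (n + 1) → P) : Prop :=
  c 0 = ⊥ ∧ c (Fin.last n) = ⊤ ∧ ∀ i : Fin n, c i.castSucc ⋖ c i.succ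

/-- `ρ` is a rank function exhibiting `P` as a ranked poset of rank `n`. -/
def IsRankFunction (n : ℕ) (ρ : P → ℕ) : Prop :=
  ρ ⊥ = 0 ∧ ρ ⊤ = n ∧ (∀ a b : P, a ⋖ b → ρ b = ρ a + 1) ∧ ∀ x : P, ρ x ≤ n

variable {L : Type*} [LinearOrder L] {n : ℕ}

/-- A `C`-labeling: the label of the `r`-th step of a maximal chain depends only on the
initial subchain up to rank `r`. -/
def IsCLabeling (Λ : {c : Fin (n + 1) → P // IsMaxChainOf n c} → Fin n → L) : Prop :=
  ∀ c c' : {c : Fin (n + 1) → P // IsMaxChainOf n c}, ∀ r : Fin (n + 1),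
    (∀ s : Fin (n + 1), s ≤ r → c.1 s = c'.1 s) →
      ∀ s : Fin n, (s : ℕ) < (r : ℕ) → Λ c s = Λ c' s

/-- An `S`-labeling: `Λ` is injective, and for every maximal chain `c` and every rank `i`
(`1 ≤ i ≤ n-1`, encoded by `i+1` with `i+1 < n` below being the 0-indexed positions `i`,
`i+1` of the two labels) at which consecutive labels differ, there is a unique maximal
chain `c'` differing from `c` only at rank `i` whose label sequence is that of `c` with
these two labels interchanged. -/
def IsSLabeling (Λ : {c : Fin (n + 1) → P // IsMaxChainOf n c} → Fin n → L) : Prop :=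
  Function.Injective Λ ∧
    ∀ (c : {c : Fin (n + 1) → P // IsMaxChainOf n c}) (i : ℕ) (h : i + 1 < n),
      Λ c ⟨i, by omega⟩ ≠ Λ c ⟨i + 1, h⟩ →
        ∃! c' : {c : Fin (n + 1) → P // IsMaxChainOf n c},
          (∀ r : Fin (n + 1), (r : ℕ) ≠ i + 1 → c'.1 r = c.1 r) ∧
            Λ c' = Λ c ∘ Equiv.swap (⟨i, by omega⟩ : Fin n) ⟨i + 1, h⟩

/-- An `R`-labeling (for the relation `rel = (· ≤ ·)`), resp. an `R*`-labeling (for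
`rel = (· < ·)`): every partial chain `⊥ = w⁰ ⋖ ⋯ ⋖ w^r ≤ u` has a completion by covering
relations from `w^r` to `u` whose labels are weakly (resp. strictly) increasing, and this
completion is unique up to rank `ρ u`. -/
def IsRelLabeling (ρ : P → ℕ) (Λ : {c : Fin (n + 1) → P // IsMaxChainOf n c} → Fin n → L)
    (rel : L → L → Prop) : Prop :=
  ∀ (c : {c : Fin (n + 1) → P // IsMaxChainOf n c}) (r : Fin (n + 1)) (u : P),
    c.1 r ≤ u →
      ∃ c' : {c : Fin (n + 1) → P // IsMaxChainOf n c},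
        ((∀ s : Fin (n + 1), s ≤ r → c'.1 s = c.1 s) ∧
          (∀ s : Fin (n + 1), (s : ℕ) = ρ u → c'.1 s = u) ∧
          (∀ (s : ℕ) (h1 : s < n) (h2 : s + 1 < n), (r : ℕ) ≤ s → s + 2 ≤ ρ u →
            rel (Λ c' ⟨s, h1⟩) (Λ c' ⟨s + 1, h2⟩))) ∧
        ∀ c'' : {c : Fin (n + 1) → P // IsMaxChainOf n c},
          ((∀ s : Fin (n + 1), s ≤ r → c''.1 s = c.1 s) ∧
            (∀ s : Fin (n + 1), (s : ℕ) = ρ u → c''.1 s = u) ∧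
            (∀ (s : ℕ) (h1 : s < n) (h2 : s + 1 < n), (r : ℕ) ≤ s → s + 2 ≤ ρ u →
              rel (Λ c'' ⟨s, h1⟩) (Λ c'' ⟨s + 1, h2⟩))) →
          ∀ s : Fin (n + 1), (s : ℕ) ≤ ρ u → c''.1 s = c'.1 s

/-- A local action of `S_n` on the maximal chains of `P`: a group action (given by a
homomorphism into the permutations of the set of maximal chains) in which each adjacent
transposition `σ_i = (i, i+1)` moves each maximal chain at most at the element of rank `i`. -/
def IsLocalAction
    (φ : Equiv.Perm (Fin n) →* Equiv.Perm {c : Fin (n + 1) → P // IsMaxChainOf n c}) : Prop :=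
  ∀ (i : ℕ) (h : i + 1 < n) (c : {c : Fin (n + 1) → P // IsMaxChainOf n c})
    (r : Fin (n + 1)), (r : ℕ) ≠ i + 1 →
      (φ (Equiv.swap (⟨i, by omega⟩ : Fin n) ⟨i + 1, h⟩) c).1 r = c.1 r

/-- The stabilizer of the maximal chain `c` under the action `φ` is the Young subgroup of
`S_n` associated with the set partition `Q` of `[n]`. -/
def IsYoungStabilizer
    (φ : Equiv.Perm (Fin n) →* Equiv.Perm {c : Fin (n + 1) → P // IsMaxChainOf n c})
    (c : {c : Fin (n + 1) → P // IsMaxChainOf n c})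
    (Q : Finpartition (Finset.univ : Finset (Fin n))) : Prop :=
  ∀ σ : Equiv.Perm (Fin n), φ σ c = c ↔ ∀ B ∈ Q.parts, ∀ a ∈ B, σ a ∈ B

/-- The Frobenius characteristic `ch(ψ) = (1/n!) Σ_σ ψ(σ) p_{cycletype(σ)}` of the character
`ψ` of the permutation action `φ` of `S_n` on the maximal chains of `P` (`ψ(σ)` is the
number of fixed maximal chains of `σ`), expressed as a symmetric polynomial in `d`
variables. -/
noncomputable def frobeniusCh
    (φ : Equiv.Perm (Fin n) →* Equiv.Perm {c : Fin (n + 1) → P // IsMaxChainOf n c})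
    (d : ℕ) : MvPolynomial (Fin d) ℚ :=
  (n.factorial : ℚ)⁻¹ •
    ∑ σ : Equiv.Perm (Fin n),
      (Nat.card {c : {c : Fin (n + 1) → P // IsMaxChainOf n c} // φ σ c = c} : ℚ) •
        ((σ.cycleType.map (psum (Fin d) ℚ)).prod *
          psum (Fin d) ℚ 1 ^ (n - σ.cycleType.sum))

/-- The flag (quasi)symmetric function of the ranked poset `P` (with rank function `ρ`,
of rank `n`) specialized to `d` variables:
`F_P(x₁,…,x_d) = Σ_{⊥ = t₀ ≤ t₁ ≤ ⋯ ≤ t_d = ⊤} ∏_i x_i^{ρ(t_i) - ρ(t_{i-1})}`. -/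
noncomputable def flagPoly (ρ : P → ℕ) (d : ℕ) : MvPolynomial (Fin d) ℚ :=
  ∑ᶠ c ∈ {c : Fin (d + 1) → P | c 0 = ⊥ ∧ c (Fin.last d) = ⊤ ∧ Monotone c},
    ∏ i : Fin d, (X i : MvPolynomial (Fin d) ℚ) ^ (ρ (c i.succ) - ρ (c i.castSucc))

end AbstractPoset

set_option linter.unusedSectionVars false
namespace RSFlag

variable {P : Type*} [PartialOrder P] [BoundedOrder P] {n : ℕ}
variable {L : Type*} [LinearOrder L]

abbrev MC (P : Type*) [PartialOrder P] [BoundedOrder P] (n : ℕ) :=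
  {c : Fin (n + 1) → P // IsMaxChainOf n c}

theorem chain_zero (c : MC P n) : c.1 0 = ⊥ := c.2.1
theorem chain_last (c : MC P n) : c.1 (Fin.last n) = ⊤ := c.2.2.1
theorem chain_cov (c : MC P n) (i : Fin n) : c.1 i.castSucc ⋖ c.1 i.succ := c.2.2.2 i

theorem chain_cov' (c : MC P n) (s : ℕ) (h : s < n) :
    c.1 ⟨s, by omega⟩ ⋖ c.1 ⟨s + 1, by omega⟩ := c.2.2.2 ⟨s, h⟩

theorem chain_strictMono (c : MC P n) : StrictMono c.1 := by
  rw [Fin.strictMono_iff_lt_succ]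
  exact fun i => (chain_cov c i).lt

section Rank

variable {ρ : P → ℕ}

theorem exists_covBy_le [Fintype P] {x y : P} (h : x < y) : ∃ z, x ⋖ z ∧ z ≤ y := by
  classical
  obtain ⟨m, hm, hmin⟩ :=
    (Finset.univ.filter fun z => x < z ∧ z ≤ y).exists_minimal ⟨y, by simp [h]⟩
  simp only [Finset.mem_filter, Finset.mem_univ, true_and] at hm hmin
  exact ⟨m, ⟨hm.1, fun w hw hwm => lt_irrefl _ (hwm.trans_le (hmin ⟨hw, hwm.le.trans hm.2⟩ hwm.le))⟩, hm.2⟩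

theorem rank_lt_of_lt [Fintype P] (hρ : IsRankFunction n ρ) : ∀ {x y : P}, x < y → ρ x < ρ y := by
  obtain ⟨h0, hn, hcov, hle⟩ := hρ
  suffices H : ∀ k (x y : P), n - ρ x ≤ k → x < y → ρ x < ρ y by
    exact fun {x y} h => H n x y (by omega) h
  intro k
  induction k with
  | zero =>
    intro x y hk hxy
    obtain ⟨z, hz, hzy⟩ := exists_covBy_le hxy
    have h1 := hcov _ _ hz
    have h2 := hle z
    omega
  | succ k ih =>
    intro x y hk hxy
    obtain ⟨z, hz, hzy⟩ := exists_covBy_le hxy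
    have hz' := hcov _ _ hz
    rcases eq_or_lt_of_le hzy with rfl | hlt
    · omega
    · have h2 := hle z
      have := ih z y (by omega) hlt
      omega

theorem rank_le_of_le [Fintype P] (hρ : IsRankFunction n ρ) {x y : P} (h : x ≤ y) : ρ x ≤ ρ y := by
  rcases eq_or_lt_of_le h with rfl | h
  · exact le_rfl
  · exact (rank_lt_of_lt hρ h).le

theorem eq_top_of_rank [Fintype P] (hρ : IsRankFunction n ρ) {x : P} (h : ρ x = n) : x = ⊤ := by
  by_contra hx
  have := rank_lt_of_lt hρ (lt_top_iff_ne_top.2 hx)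
  rw [h, hρ.2.1] at this
  omega

theorem chain_rank (hρ : IsRankFunction n ρ) (c : MC P n) : ∀ i : Fin (n + 1), ρ (c.1 i) = i := by
  intro i
  induction i using Fin.induction with
  | zero => rw [chain_zero]; exact hρ.1
  | succ i ih =>
    rw [hρ.2.2.1 _ _ (chain_cov c i), ih]
    simp

theorem exists_mc [Fintype P] (hρ : IsRankFunction n ρ) : Nonempty (MC P n) := by
  classical
  have hcov : ∀ x : P, x < ⊤ → ∃ z, x ⋖ z := fun x hx => (exists_covBy_le hx).imp fun z h => h.1
  choose g hg using hcov
  set st : P → P := fun x => if h : x < ⊤ then g x h else x with hst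
  set f : ℕ → P := fun k => st^[k] ⊥ with hf
  have hf0 : f 0 = ⊥ := rfl
  have hfs : ∀ k, f (k + 1) = st (f k) := fun k => Function.iterate_succ_apply' st k ⊥
  have hrk : ∀ k, k ≤ n → ρ (f k) = k := by
    intro k
    induction k with
    | zero => intro _; rw [hf0, hρ.1]
    | succ k ih =>
      intro hk
      have h1 : ρ (f k) = k := ih (by omega)
      have h2 : f k < ⊤ := by
        rcases lt_or_eq_of_le (le_top (a := f k)) with h | h
        · exact h
        · exfalso; rw [h, hρ.2.1] at h1; omega
      rw [hfs, hst]
      simp only [dif_pos h2]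
      rw [hρ.2.2.1 _ _ (hg _ h2)]
      omega
  have hlt : ∀ k, k < n → f k < ⊤ := by
    intro k hk
    have h1 : ρ (f k) = k := hrk k (by omega)
    rcases lt_or_eq_of_le (le_top (a := f k)) with h | h
    · exact h
    · exfalso; rw [h, hρ.2.1] at h1; omega
  refine ⟨⟨fun i => f i, ?_, ?_, ?_⟩⟩
  · show f ((0 : Fin (n + 1)) : ℕ) = ⊥
    simpa using hf0
  · show f ((Fin.last n : Fin (n + 1)) : ℕ) = ⊤
    simp only [Fin.val_last]
    exact eq_top_of_rank hρ (hrk n le_rfl)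
  · intro i
    show f ((i.castSucc : Fin (n + 1)) : ℕ) ⋖ f ((i.succ : Fin (n + 1)) : ℕ)
    simp only [Fin.coe_castSucc, Fin.val_succ]
    have h2 : f i < ⊤ := hlt i i.2
    rw [hfs, hst]
    simp only [dif_pos h2]
    exact hg _ h2

end Rank

end RSFlag
namespace RSFlag

variable {P : Type*} [PartialOrder P] [BoundedOrder P] {n : ℕ}
variable {L : Type*} [LinearOrder L]

/-! ### Label segments -/

def seg (f : Fin n → L) (lo hi : ℕ) : Multiset L :=
  ((Finset.univ.filter fun i : Fin n => lo ≤ (i : ℕ) ∧ (i : ℕ) < hi).val).map f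

theorem seg_congr {f g : Fin n → L} {lo hi : ℕ}
    (h : ∀ i : Fin n, lo ≤ (i : ℕ) → (i : ℕ) < hi → f i = g i) :
    seg f lo hi = seg g lo hi := by
  refine Multiset.map_congr rfl ?_
  intro i hi'
  rw [Finset.mem_val, Finset.mem_filter] at hi'
  exact h i hi'.2.1 hi'.2.2

theorem seg_empty {f : Fin n → L} {lo hi : ℕ} (h : hi ≤ lo) : seg f lo hi = 0 := by
  unfold seg
  rw [Finset.filter_false_of_mem (fun i _ => by omega)]
  simp

theorem seg_succ {f : Fin n → L} {lo hi : ℕ} (hlo : lo ≤ hi) (hhi : hi < n) :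
    seg f lo (hi + 1) = f ⟨hi, hhi⟩ ::ₘ seg f lo hi := by
  unfold seg
  have : (Finset.univ.filter fun i : Fin n => lo ≤ (i : ℕ) ∧ (i : ℕ) < hi + 1) =
      insert ⟨hi, hhi⟩ (Finset.univ.filter fun i : Fin n => lo ≤ (i : ℕ) ∧ (i : ℕ) < hi) := by
    ext j
    simp only [Finset.mem_filter, Finset.mem_univ, true_and, Finset.mem_insert, Fin.ext_iff]
    omega
  rw [this, Finset.insert_val_of_notMem (by simp), Multiset.map_cons]

theorem seg_card {f : Fin n → L} : ∀ {hi : ℕ}, hi ≤ n → Multiset.card (seg f 0 hi) = hi := by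
  intro hi
  induction hi with
  | zero => intro _; rw [seg_empty le_rfl]; rfl
  | succ hi ih =>
    intro h
    rw [seg_succ (Nat.zero_le _) (by omega), Multiset.card_cons, ih (by omega)]

theorem seg_mono {f : Fin n → L} {lo hi hi' : ℕ} (h : hi ≤ hi') :
    seg f lo hi ≤ seg f lo hi' := by
  refine Multiset.map_le_map ?_
  rw [Finset.val_le_iff]
  intro x hx
  simp only [Finset.mem_filter, Finset.mem_univ, true_and] at hx ⊢
  omega

theorem seg_filter_eq (f : Fin n → L) (lo hi : ℕ) :
    seg f lo hi = (Finset.univ.val.filter fun i : Fin n => lo ≤ (i : ℕ) ∧ (i : ℕ) < hi).map f := by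
  unfold seg
  rw [Finset.filter_val]

theorem seg_add {f : Fin n → L} {k : ℕ} (hk : k ≤ n) :
    seg f 0 k + seg f k n = seg f 0 n := by
  classical
  rw [seg_filter_eq, seg_filter_eq, seg_filter_eq]
  have h1 : (Finset.univ.val.filter fun i : Fin n => k ≤ (i : ℕ) ∧ (i : ℕ) < n) =
      Finset.univ.val.filter fun i : Fin n => ¬(0 ≤ (i : ℕ) ∧ (i : ℕ) < k) := by
    refine Multiset.filter_congr ?_
    intro i _
    have := i.2
    constructor
    · intro h; omega
    · intro h; omega
  have h2 : (Finset.univ.val.filter fun i : Fin n => 0 ≤ (i : ℕ) ∧ (i : ℕ) < n) =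
      Finset.univ.val := by
    rw [Multiset.filter_eq_self]
    intro i _
    exact ⟨Nat.zero_le _, i.2⟩
  rw [h1, h2, ← Multiset.map_add, Multiset.filter_add_not]

theorem seg_swap {k : ℕ} {f g : Fin n → L} {a b : Fin n}
    (hg : g = f ∘ Equiv.swap a b) (ha : (a : ℕ) < k) (hb : (b : ℕ) < k) :
    seg g 0 k = seg f 0 k := by
  classical
  subst hg
  unfold seg
  set S := Finset.univ.filter fun i : Fin n => 0 ≤ (i : ℕ) ∧ (i : ℕ) < k with hS
  have key : Finset.map (Equiv.swap a b).toEmbedding S = S := by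
    ext j
    rw [Finset.mem_map_equiv, Equiv.symm_swap]
    simp only [hS, Finset.mem_filter, Finset.mem_univ, true_and]
    rcases eq_or_ne j a with rfl | hja
    · rw [Equiv.swap_apply_left]; omega
    rcases eq_or_ne j b with rfl | hjb
    · rw [Equiv.swap_apply_right]; omega
    · rw [Equiv.swap_apply_of_ne_of_ne hja hjb]
  have h2 : Multiset.map (⇑(Equiv.swap a b)) S.val = S.val := by
    have h3 := congrArg Finset.val key
    rwa [Finset.map_val, Equiv.coe_toEmbedding] at h3
  rw [← Multiset.map_map, h2]

/-! ### Monotone from adjacent -/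

theorem mono_of_adj {f : Fin n → L} {lo hi : ℕ}
    (h : ∀ (s : ℕ) (h1 : s < n) (h2 : s + 1 < n), lo ≤ s → s + 2 ≤ hi → f ⟨s, h1⟩ ≤ f ⟨s + 1, h2⟩) :
    ∀ i j : Fin n, i ≤ j → lo ≤ (i : ℕ) → (j : ℕ) < hi → f i ≤ f j := by
  suffices H : ∀ d (i j : Fin n), (j : ℕ) = (i : ℕ) + d → lo ≤ (i : ℕ) → (j : ℕ) < hi →
      f i ≤ f j by
    intro i j hij hlo hhi
    rw [Fin.le_def] at hij
    exact H ((j : ℕ) - (i : ℕ)) i j (by omega) hlo hhi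
  intro d
  induction d with
  | zero =>
    intro i j hj _ _
    have : i = j := Fin.ext (by omega)
    rw [this]
  | succ d ih =>
    intro i j hj hlo hhi
    have hjn := j.2
    have h1 : (i : ℕ) + d < n := by omega
    refine le_trans (ih i ⟨(i : ℕ) + d, h1⟩ rfl hlo (by simp; omega)) ?_
    have h2 := h ((i : ℕ) + d) h1 (by omega) (by omega) (by omega)
    have h3 : (⟨(i : ℕ) + d + 1, by omega⟩ : Fin n) = j := Fin.ext (by simp; omega)
    rw [← h3]
    exact h2

/-! ### Sorted sequences are determined by their multiset -/

theorem sorted_ext {f g : Fin n → L} (lo : ℕ) :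
    ∀ hi : ℕ, hi ≤ n →
    (∀ i j : Fin n, i ≤ j → lo ≤ (i : ℕ) → (j : ℕ) < hi → f i ≤ f j) →
    (∀ i j : Fin n, i ≤ j → lo ≤ (i : ℕ) → (j : ℕ) < hi → g i ≤ g j) →
    seg f lo hi = seg g lo hi →
    ∀ i : Fin n, lo ≤ (i : ℕ) → (i : ℕ) < hi → f i = g i := by
  intro hi
  induction hi with
  | zero => intro _ _ _ _ i _ h; omega
  | succ hi ih =>
    intro hn hf hg hseg i hlo hhi
    by_cases hcase : lo ≤ hi
    swap
    · omega
    have hhin : hi < n := by omega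
    set i0 : Fin n := ⟨hi, hhin⟩ with hi0
    have hsf := seg_succ (f := f) (lo := lo) hcase hhin
    have hsg := seg_succ (f := g) (lo := lo) hcase hhin
    have htop : f i0 = g i0 := by
      have h1 : f i0 ∈ seg g lo (hi + 1) := by
        rw [← hseg, hsf]; exact Multiset.mem_cons_self _ _
      have h2 : g i0 ∈ seg f lo (hi + 1) := by
        rw [hseg, hsg]; exact Multiset.mem_cons_self _ _
      obtain ⟨j, hj, hji⟩ := Multiset.mem_map.1 h1
      rw [Finset.mem_val, Finset.mem_filter] at hj
      obtain ⟨j', hj', hji'⟩ := Multiset.mem_map.1 h2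
      rw [Finset.mem_val, Finset.mem_filter] at hj'
      have h3 : g j ≤ g i0 := hg j i0 (by rw [Fin.le_def]; show (j : ℕ) ≤ hi; omega)
        hj.2.1 (by show hi < hi + 1; omega)
      have h4 : f j' ≤ f i0 := hf j' i0 (by rw [Fin.le_def]; show (j' : ℕ) ≤ hi; omega)
        hj'.2.1 (by show hi < hi + 1; omega)
      exact le_antisymm (hji ▸ h3) (hji' ▸ h4)
    have hseg' : seg f lo hi = seg g lo hi := by
      have heq : f i0 ::ₘ seg f lo hi = f i0 ::ₘ seg g lo hi := by
        rw [← hsf, hseg, hsg, htop]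
      exact (Multiset.cons_inj_right _).1 heq
    rcases lt_or_eq_of_le (by omega : (i : ℕ) ≤ hi) with h | h
    · exact ih (by omega) (fun i j a b c => hf i j a b (by omega))
        (fun i j a b c => hg i j a b (by omega)) hseg' i hlo h
    · have : i = i0 := Fin.ext h
      rw [this]; exact htop

end RSFlag
namespace RSFlag

variable {P : Type*} [PartialOrder P] [BoundedOrder P] {n : ℕ}
variable {L : Type*} [LinearOrder L]

/-! ### Inversions and sorting via the S-labeling -/

def invSet (Λ : MC P n → Fin n → L) (c : MC P n) (k : ℕ) : Finset (Fin n × Fin n) :=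
  Finset.univ.filter fun q => q.1 < q.2 ∧ ((q.2 : Fin n) : ℕ) < k ∧ Λ c q.2 < Λ c q.1

theorem invSet_lt {Λ : MC P n → Fin n → L} {c c' : MC P n} {p k : ℕ} (hp1 : p + 1 < n)
    (hk : p + 1 < k)
    (hdesc : Λ c ⟨p + 1, hp1⟩ < Λ c ⟨p, by omega⟩)
    (hΛ : Λ c' = Λ c ∘ Equiv.swap (⟨p, by omega⟩ : Fin n) ⟨p + 1, hp1⟩) :
    (invSet Λ c' k).card < (invSet Λ c k).card := by
  classical
  set a : Fin n := ⟨p, by omega⟩ with hadef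
  set b : Fin n := ⟨p + 1, hp1⟩ with hbdef
  set e := Equiv.swap a b with hedef
  have hea : e a = b := Equiv.swap_apply_left a b
  have heb : e b = a := Equiv.swap_apply_right a b
  have heo : ∀ x : Fin n, x ≠ a → x ≠ b → e x = x := fun x h1 h2 =>
    Equiv.swap_apply_of_ne_of_ne h1 h2
  have hab : a < b := by rw [Fin.lt_def]; show p < p + 1; omega
  have hmem : (a, b) ∈ invSet Λ c k := by
    simp only [invSet, Finset.mem_filter, Finset.mem_univ, true_and]
    exact ⟨hab, hk, hdesc⟩
  have hsub : ∀ q ∈ invSet Λ c' k, (e q.1, e q.2) ∈ (invSet Λ c k).erase (a, b) := by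
    rintro ⟨i, j⟩ hq
    simp only [invSet, Finset.mem_filter, Finset.mem_univ, true_and] at hq
    obtain ⟨hij, hjk, hinv⟩ := hq
    rw [hΛ] at hinv
    simp only [Function.comp_apply] at hinv
    -- hinv : Λ c (e j) < Λ c (e i)
    have hne : ¬(i = a ∧ j = b) := by
      rintro ⟨rfl, rfl⟩
      rw [hea, heb] at hinv
      exact absurd hinv (not_lt.2 hdesc.le)
    have hlt : e i < e j := by
      rcases eq_or_ne i a with rfl | hia
      · have hjb : j ≠ b := fun h => hne ⟨rfl, h⟩
        have hja : j ≠ a := ne_of_gt hij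
        rw [hea, heo j hja hjb, Fin.lt_def]
        rw [Fin.lt_def] at hij
        have : (j : ℕ) ≠ p + 1 := fun h => hjb (Fin.ext h)
        simp only [hbdef]
        simp only [hadef] at hij
        omega
      rcases eq_or_ne i b with rfl | hib
      · have hja : j ≠ a := by
          intro h; subst h
          rw [Fin.lt_def] at hij hab
          omega
        have hjb : j ≠ b := ne_of_gt hij
        rw [heb, heo j hja hjb]
        exact lt_trans hab hij
      · rw [heo i hia hib]
        rcases eq_or_ne j a with rfl | hja
        · rw [hea]; exact lt_trans hij hab
        rcases eq_or_ne j b with rfl | hjb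
        · rw [heb, Fin.lt_def]
          rw [Fin.lt_def] at hij
          have h1 : (i : ℕ) ≠ p := fun h => hia (Fin.ext h)
          simp only [hbdef] at hij
          simp only [hadef]
          omega
        · rw [heo j hja hjb]; exact hij
    have hjk' : ((e j : Fin n) : ℕ) < k := by
      rcases eq_or_ne j a with rfl | hja
      · rw [hea]; exact hk
      rcases eq_or_ne j b with rfl | hjb
      · rw [heb]; show p < k; omega
      · rw [heo j hja hjb]; exact hjk
    rw [Finset.mem_erase]
    constructor
    · intro hcon
      rw [Prod.mk.injEq] at hcon
      have h1 : i = e a := by rw [← hcon.1, Equiv.swap_apply_self]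
      have h2 : j = e b := by rw [← hcon.2, Equiv.swap_apply_self]
      rw [hea] at h1; rw [heb] at h2
      subst h1; subst h2
      rw [Fin.lt_def] at hij hab
      omega
    · simp only [invSet, Finset.mem_filter, Finset.mem_univ, true_and]
      exact ⟨hlt, hjk', hinv⟩
  calc (invSet Λ c' k).card ≤ ((invSet Λ c k).erase (a, b)).card := by
        refine Finset.card_le_card_of_injOn (fun q => (e q.1, e q.2)) hsub ?_
        rintro ⟨i1, j1⟩ _ ⟨i2, j2⟩ _ h
        rw [Prod.mk.injEq] at h
        exact Prod.ext (e.injective h.1) (e.injective h.2)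
    _ < (invSet Λ c k).card := Finset.card_erase_lt_of_mem hmem

theorem sort_below {Λ : MC P n → Fin n → L} (hS : IsSLabeling Λ) :
    ∀ (N : ℕ) (c : MC P n) (k : ℕ), k ≤ n → (invSet Λ c k).card ≤ N →
    ∃ c' : MC P n, (∀ r : Fin (n + 1), k ≤ (r : ℕ) → c'.1 r = c.1 r) ∧
      (∀ i j : Fin n, i ≤ j → (j : ℕ) < k → Λ c' i ≤ Λ c' j) ∧
      seg (Λ c') 0 k = seg (Λ c) 0 k := by
  intro N
  induction N with
  | zero =>
    intro c k hk hN
    refine ⟨c, fun r _ => rfl, ?_, rfl⟩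
    have hnodesc : ¬∃ (p : ℕ) (h1 : p + 1 < n), p + 1 < k ∧
        Λ c ⟨p + 1, h1⟩ < Λ c ⟨p, by omega⟩ := by
      rintro ⟨p, h1, hpk, hlt⟩
      have : (⟨⟨p, by omega⟩, ⟨p + 1, h1⟩⟩ : Fin n × Fin n) ∈ invSet Λ c k := by
        simp only [invSet, Finset.mem_filter, Finset.mem_univ, true_and]
        refine ⟨?_, hpk, hlt⟩
        rw [Fin.lt_def]; show p < p + 1; omega
      have := Finset.card_pos.2 ⟨_, this⟩
      omega
    intro i j hij hjk
    refine mono_of_adj (lo := 0) (hi := k) ?_ i j hij (Nat.zero_le _) hjk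
    intro s h1 h2 _ hs2
    by_contra hcon
    exact hnodesc ⟨s, h2, by omega, lt_of_not_ge hcon⟩
  | succ N ih =>
    intro c k hk hN
    by_cases hdesc : ∃ (p : ℕ) (h1 : p + 1 < n), p + 1 < k ∧
        Λ c ⟨p + 1, h1⟩ < Λ c ⟨p, by omega⟩
    · obtain ⟨p, h1, hpk, hlt⟩ := hdesc
      have hne : Λ c ⟨p, by omega⟩ ≠ Λ c ⟨p + 1, h1⟩ := ne_of_gt hlt
      obtain ⟨c₂, ⟨hfix, hlab⟩, -⟩ := hS.2 c p h1 hne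
      have hcard : (invSet Λ c₂ k).card ≤ N := by
        have := invSet_lt h1 hpk hlt hlab
        omega
      obtain ⟨c₃, hfix3, hsort3, hseg3⟩ := ih c₂ k hk hcard
      refine ⟨c₃, ?_, hsort3, ?_⟩
      · intro r hr
        rw [hfix3 r hr, hfix r (by omega)]
      · rw [hseg3, seg_swap hlab (k := k) (by show p < k; omega) (by show p + 1 < k; omega)]
    · refine ⟨c, fun r _ => rfl, ?_, rfl⟩
      intro i j hij hjk
      refine mono_of_adj (lo := 0) (hi := k) ?_ i j hij (Nat.zero_le _) hjk
      intro s h1 h2 _ hs2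
      by_contra hcon
      exact hdesc ⟨s, h2, by omega, lt_of_not_ge hcon⟩

end RSFlag
namespace RSFlag

variable {P : Type*} [PartialOrder P] [BoundedOrder P] {n : ℕ}
variable {L : Type*} [LinearOrder L]
variable {ρ : P → ℕ}

/-! ### Canonical (increasing) chains from the R-labeling -/

theorem exists_canonical [Fintype P] (Λ : MC P n → Fin n → L)
    (hρ : IsRankFunction n ρ) (hR : IsRelLabeling ρ Λ (· ≤ ·)) (u : P) :
    ∃ c : MC P n, (∀ s : Fin (n + 1), (s : ℕ) = ρ u → c.1 s = u) ∧
      (∀ (s : ℕ) (h1 : s < n) (h2 : s + 1 < n), s + 2 ≤ ρ u →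
        Λ c ⟨s, h1⟩ ≤ Λ c ⟨s + 1, h2⟩) := by
  obtain ⟨c0⟩ := exists_mc hρ
  have hb : c0.1 0 ≤ u := by rw [chain_zero]; exact bot_le
  obtain ⟨d, ⟨hag, hpos, hsor⟩, -⟩ := hR c0 0 u hb
  exact ⟨d, hpos, fun s h1 h2 hs2 => hsor s h1 h2 (Nat.zero_le _) hs2⟩

theorem canonical_unique [Fintype P] (Λ : MC P n → Fin n → L)
    (hρ : IsRankFunction n ρ) (hR : IsRelLabeling ρ Λ (· ≤ ·)) (u : P) (c c' : MC P n)
    (hcu : ∀ s : Fin (n + 1), (s : ℕ) = ρ u → c.1 s = u)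
    (hc'u : ∀ s : Fin (n + 1), (s : ℕ) = ρ u → c'.1 s = u)
    (hs : ∀ (s : ℕ) (h1 : s < n) (h2 : s + 1 < n), s + 2 ≤ ρ u →
        Λ c ⟨s, h1⟩ ≤ Λ c ⟨s + 1, h2⟩)
    (hs' : ∀ (s : ℕ) (h1 : s < n) (h2 : s + 1 < n), s + 2 ≤ ρ u →
        Λ c' ⟨s, h1⟩ ≤ Λ c' ⟨s + 1, h2⟩) :
    ∀ s : Fin (n + 1), (s : ℕ) ≤ ρ u → c.1 s = c'.1 s := by
  have hb : c.1 0 ≤ u := by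
    have := hcu ⟨ρ u, Nat.lt_succ_of_le (hρ.2.2.2 u)⟩ rfl
    rw [chain_zero]; exact bot_le
  obtain ⟨d, -, huni⟩ := hR c 0 u hb
  have h1 := huni c ⟨fun s _ => rfl, hcu, fun s h1 h2 _ hs2 => hs s h1 h2 hs2⟩
  have h2 := huni c' ⟨?_, hc'u, fun s h1 h2 _ hs2 => hs' s h1 h2 hs2⟩
  · exact fun s hsu => (h1 s hsu).trans (h2 s hsu).symm
  · intro s hs0
    rw [Fin.le_zero_iff.1 hs0, chain_zero, chain_zero]

variable (Λ : MC P n → Fin n → L)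

noncomputable def canon [Fintype P] (hρ : IsRankFunction n ρ)
    (hR : IsRelLabeling ρ Λ (· ≤ ·)) (u : P) : MC P n :=
  (exists_canonical Λ hρ hR u).choose

variable (hρ : IsRankFunction n ρ) (hR : IsRelLabeling ρ Λ (· ≤ ·))

theorem canon_through [Fintype P] (u : P) :
    ∀ s : Fin (n + 1), (s : ℕ) = ρ u → (canon Λ hρ hR u).1 s = u :=
  (exists_canonical Λ hρ hR u).choose_spec.1

theorem canon_adj [Fintype P] (u : P) :
    ∀ (s : ℕ) (h1 : s < n) (h2 : s + 1 < n), s + 2 ≤ ρ u →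
      Λ (canon Λ hρ hR u) ⟨s, h1⟩ ≤ Λ (canon Λ hρ hR u) ⟨s + 1, h2⟩ :=
  (exists_canonical Λ hρ hR u).choose_spec.2

theorem canon_sorted [Fintype P] (u : P) :
    ∀ i j : Fin n, i ≤ j → (j : ℕ) < ρ u → Λ (canon Λ hρ hR u) i ≤ Λ (canon Λ hρ hR u) j :=
  fun i j hij hj =>
    mono_of_adj (lo := 0) (hi := ρ u) (fun s h1 h2 _ hs2 => canon_adj Λ hρ hR u s h1 h2 hs2)
      i j hij (Nat.zero_le _) hj

/-! ### The multiset invariant -/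

noncomputable def Ix [Fintype P] (u : P) : Multiset L :=
  seg (Λ (canon Λ hρ hR u)) 0 (ρ u)

theorem Ix_card [Fintype P] (u : P) : Multiset.card (Ix Λ hρ hR u) = ρ u :=
  seg_card (hρ.2.2.2 u)

theorem seg_eq_Ix [Fintype P] (hC : IsCLabeling Λ) (hS : IsSLabeling Λ)
    (c : MC P n) (k : Fin (n + 1)) :
    seg (Λ c) 0 (k : ℕ) = Ix Λ hρ hR (c.1 k) := by
  set u := c.1 k with hu
  have hrk : ρ u = (k : ℕ) := chain_rank hρ c k
  have hk_le : (k : ℕ) ≤ n := by omega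
  obtain ⟨c', hfix, hsort, hseg⟩ := sort_below hS _ c (k : ℕ) hk_le le_rfl
  have hthrough : ∀ s : Fin (n + 1), (s : ℕ) = ρ u → c'.1 s = u := by
    intro s hsu
    have : s = k := Fin.ext (by omega)
    rw [this, hfix k le_rfl]
  have hsort' : ∀ (s : ℕ) (h1 : s < n) (h2 : s + 1 < n), s + 2 ≤ ρ u →
      Λ c' ⟨s, h1⟩ ≤ Λ c' ⟨s + 1, h2⟩ := by
    intro s h1 h2 hs2
    exact hsort ⟨s, h1⟩ ⟨s + 1, h2⟩ (by rw [Fin.le_def]; show s ≤ s + 1; omega) (by show s + 1 < (k : ℕ); omega)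
  have huniq := canonical_unique Λ hρ hR u c' (canon Λ hρ hR u) hthrough
    (canon_through Λ hρ hR u) hsort' (canon_adj Λ hρ hR u)
  have hlab : ∀ i : Fin n, 0 ≤ (i : ℕ) → (i : ℕ) < ρ u → Λ c' i = Λ (canon Λ hρ hR u) i := by
    intro i _ hik
    refine hC c' (canon Λ hρ hR u) ⟨ρ u, Nat.lt_succ_of_le (hρ.2.2.2 u)⟩ ?_ i hik
    intro s hs
    rw [Fin.le_def] at hs
    exact huniq s hs
  rw [Ix, ← seg_congr hlab, hrk, hseg]

theorem Ix_mono [Fintype P] (hC : IsCLabeling Λ) (hS : IsSLabeling Λ) {x y : P} (hxy : x ≤ y) :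
    Ix Λ hρ hR x ≤ Ix Λ hρ hR y := by
  set cx := canon Λ hρ hR x with hcxdef
  have hltx : ρ x < n + 1 := Nat.lt_succ_of_le (hρ.2.2.2 x)
  have hlty : ρ y < n + 1 := Nat.lt_succ_of_le (hρ.2.2.2 y)
  have hcx : cx.1 ⟨ρ x, hltx⟩ = x := canon_through Λ hρ hR x _ rfl
  have hxu : cx.1 ⟨ρ x, hltx⟩ ≤ y := by rw [hcx]; exact hxy
  obtain ⟨d, ⟨hag, hdy, -⟩, -⟩ := hR cx ⟨ρ x, hltx⟩ y hxu
  have h1 : Ix Λ hρ hR x = seg (Λ d) 0 (ρ x) := by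
    rw [Ix]
    refine seg_congr ?_
    intro i _ hik
    refine hC cx d ⟨ρ x, hltx⟩ (fun s hs => (hag s hs).symm) i hik
  have h2 : seg (Λ d) 0 (ρ y) = Ix Λ hρ hR y := by
    have h3 := seg_eq_Ix Λ hρ hR hC hS d ⟨ρ y, hlty⟩
    rw [hdy ⟨ρ y, hlty⟩ rfl] at h3
    exact h3
  rw [h1, ← h2]
  exact seg_mono (rank_le_of_le hρ hxy)

theorem seg_n_eq [Fintype P] (hC : IsCLabeling Λ) (hS : IsSLabeling Λ) (c : MC P n) :
    seg (Λ c) 0 n = Ix Λ hρ hR ⊤ := by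
  have := seg_eq_Ix Λ hρ hR hC hS c (Fin.last n)
  rw [chain_last] at this
  simpa using this

theorem Ix_card_top [Fintype P] : Multiset.card (Ix Λ hρ hR (⊤ : P)) = n := by
  rw [Ix_card, hρ.2.1]

/-! ### Extension chains and injectivity -/

theorem exists_ext [Fintype P] (hC : IsCLabeling Λ) (x : P) :
    ∃ e : MC P n, (∃ hlt : ρ x < n + 1, e.1 ⟨ρ x, hlt⟩ = x) ∧
      (∀ i j : Fin n, i ≤ j → (j : ℕ) < ρ x → Λ e i ≤ Λ e j) ∧
      (∀ i j : Fin n, i ≤ j → ρ x ≤ (i : ℕ) → Λ e i ≤ Λ e j) ∧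
      seg (Λ e) 0 (ρ x) = Ix Λ hρ hR x := by
  set cx := canon Λ hρ hR x with hcxdef
  have hltx : ρ x < n + 1 := Nat.lt_succ_of_le (hρ.2.2.2 x)
  have hcx : cx.1 ⟨ρ x, hltx⟩ = x := canon_through Λ hρ hR x _ rfl
  obtain ⟨d, ⟨hag, hdt, hsor⟩, -⟩ := hR cx ⟨ρ x, hltx⟩ ⊤ le_top
  have hlabeq : ∀ i : Fin n, 0 ≤ (i : ℕ) → (i : ℕ) < ρ x → Λ cx i = Λ d i := by
    intro i _ hik
    exact hC cx d ⟨ρ x, hltx⟩ (fun s hs => (hag s hs).symm) i hik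
  refine ⟨d, ⟨hltx, by rw [hag ⟨ρ x, hltx⟩ le_rfl, hcx]⟩, ?_, ?_, ?_⟩
  · intro i j hij hj
    rw [← hlabeq i (Nat.zero_le _) (by rw [Fin.le_def] at hij; omega), ← hlabeq j (Nat.zero_le _) hj]
    exact canon_sorted Λ hρ hR x i j hij hj
  · intro i j hij hi
    refine mono_of_adj (lo := ρ x) (hi := n) ?_ i j hij hi j.2
    intro s h1 h2 hls hs2
    have := hsor s h1 h2 hls (by rw [hρ.2.1]; omega)
    exact this
  · rw [Ix]
    exact (seg_congr hlabeq).symm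

theorem Ix_inj [Fintype P] (hC : IsCLabeling Λ) (hS : IsSLabeling Λ) {x y : P}
    (h : Ix Λ hρ hR x = Ix Λ hρ hR y) : x = y := by
  have hcard : ρ x = ρ y := by
    rw [← Ix_card Λ hρ hR x, ← Ix_card Λ hρ hR y, h]
  set k := ρ x with hk
  obtain ⟨ex, ⟨hltx, hex⟩, hlowx, hhighx, hsegx⟩ := exists_ext Λ hρ hR hC x
  obtain ⟨ey, ⟨hlty, hey⟩, hlowy, hhighy, hsegy⟩ := exists_ext Λ hρ hR hC y
  have hkn : k ≤ n := hρ.2.2.2 x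
  have hseg_top_x : seg (Λ ex) 0 k + seg (Λ ex) k n = Ix Λ hρ hR ⊤ := by
    rw [seg_add hkn]; exact seg_n_eq Λ hρ hR hC hS ex
  have hseg_top_y : seg (Λ ey) 0 k + seg (Λ ey) k n = Ix Λ hρ hR ⊤ := by
    rw [seg_add hkn]; exact seg_n_eq Λ hρ hR hC hS ey
  have hseglow : seg (Λ ex) 0 k = seg (Λ ey) 0 k := by
    rw [hsegx, h, ← hsegy, hcard]
  have hseghigh : seg (Λ ex) k n = seg (Λ ey) k n := by
    have := hseg_top_x.trans hseg_top_y.symm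
    rw [hseglow] at this
    exact add_left_cancel this
  have hfun : Λ ex = Λ ey := by
    funext i
    by_cases hik : (i : ℕ) < k
    · exact sorted_ext 0 k hkn (fun i j a _ c => hlowx i j a c)
        (fun i j a _ c => hlowy i j a (by omega)) hseglow i (Nat.zero_le _) hik
    · refine sorted_ext k n le_rfl (fun i j a b _ => hhighx i j a b)
        (fun i j a b _ => hhighy i j a (by omega)) hseghigh i (by omega) i.2
  have hexey : ex = ey := hS.1 hfun
  have h1 : x = ex.1 ⟨k, hltx⟩ := hex.symm
  have h2 : ey.1 ⟨ρ y, hlty⟩ = y := hey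
  rw [h1, hexey, ← h2]
  rw [show (⟨k, hltx⟩ : Fin (n + 1)) = ⟨ρ y, hlty⟩ from Fin.mk_eq_mk.2 hcard]

end RSFlag
namespace RSFlag

variable {P : Type*} [PartialOrder P] [BoundedOrder P] {n : ℕ}
variable {L : Type*} [LinearOrder L]
variable {ρ : P → ℕ}
variable (Λ : MC P n → Fin n → L)

theorem bubble_chain (hS : IsSLabeling Λ) :
    ∀ (m : ℕ) (c : MC P n) (k : ℕ), k ≤ n → ∀ p : Fin n, (p : ℕ) < k →
    k - 1 - (p : ℕ) ≤ m →
    (∀ q : Fin n, p < q → (q : ℕ) < k → Λ c p < Λ c q) →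
    ∃ (c' : MC P n) (hk1 : k - 1 < n),
      (∀ r : Fin (n + 1), k ≤ (r : ℕ) → c'.1 r = c.1 r) ∧
      Λ c' ⟨k - 1, hk1⟩ = Λ c p ∧ seg (Λ c') 0 k = seg (Λ c) 0 k := by
  intro m
  induction m with
  | zero =>
    intro c k hk p hp hm _
    have hk1 : k - 1 < n := by omega
    refine ⟨c, hk1, fun r _ => rfl, ?_, rfl⟩
    have : (⟨k - 1, hk1⟩ : Fin n) = p := by
      refine Fin.ext ?_
      show k - 1 = (p : ℕ)
      omega
    rw [this]
  | succ m ih =>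
    intro c k hk p hp hm hstrict
    have hk1 : k - 1 < n := by omega
    by_cases hpk : (p : ℕ) = k - 1
    · refine ⟨c, hk1, fun r _ => rfl, ?_, rfl⟩
      have : (⟨k - 1, hk1⟩ : Fin n) = p := Fin.ext (by show k - 1 = (p : ℕ); omega)
      rw [this]
    · have hp1n : (p : ℕ) + 1 < n := by omega
      set q0 : Fin n := ⟨(p : ℕ) + 1, hp1n⟩ with hq0
      have hpq0 : p < q0 := by rw [Fin.lt_def]; show (p : ℕ) < (p : ℕ) + 1; omega
      have hq0k : (q0 : ℕ) < k := by show (p : ℕ) + 1 < k; omega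
      have hlt : Λ c p < Λ c q0 := hstrict q0 hpq0 hq0k
      have hpeta : (⟨(p : ℕ), by omega⟩ : Fin n) = p := Fin.ext rfl
      have hne : Λ c ⟨(p : ℕ), by omega⟩ ≠ Λ c ⟨(p : ℕ) + 1, hp1n⟩ := by
        rw [hpeta]
        exact ne_of_lt hlt
      obtain ⟨c₂, ⟨hfix2, hlab2⟩, -⟩ := hS.2 c (p : ℕ) hp1n hne
      have hlab2' : ∀ i : Fin n, Λ c₂ i = Λ c (Equiv.swap (⟨(p : ℕ), by omega⟩ : Fin n) ⟨(p : ℕ) + 1, hp1n⟩ i) := by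
        intro i
        rw [hlab2]
        rfl
      have hc2q0 : Λ c₂ q0 = Λ c p := by
        rw [hlab2' q0]
        have : Equiv.swap (⟨(p : ℕ), by omega⟩ : Fin n) ⟨(p : ℕ) + 1, hp1n⟩ q0 =
            ⟨(p : ℕ), by omega⟩ := Equiv.swap_apply_right _ _
        rw [this, hpeta]
      have hstrict2 : ∀ q : Fin n, q0 < q → (q : ℕ) < k → Λ c₂ q0 < Λ c₂ q := by
        intro q hq hqk
        have hqa : q ≠ ⟨(p : ℕ), by omega⟩ := by
          intro hcon
          rw [Fin.lt_def] at hq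
          rw [hcon] at hq
          simp only [hq0] at hq
          omega
        have hqb : q ≠ ⟨(p : ℕ) + 1, hp1n⟩ := by
          intro hcon
          rw [Fin.lt_def] at hq
          rw [hcon] at hq
          simp only [hq0] at hq
          omega
        rw [hc2q0, hlab2' q, Equiv.swap_apply_of_ne_of_ne hqa hqb]
        refine hstrict q (lt_trans hpq0 hq) hqk
      obtain ⟨c₃, hk1', hfix3, hlab3, hseg3⟩ := ih c₂ k hk q0 hq0k (by show k - 1 - ((p:ℕ)+1) ≤ m; omega) hstrict2
      refine ⟨c₃, hk1', ?_, ?_, ?_⟩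
      · intro r hr
        rw [hfix3 r hr, hfix2 r (by omega)]
      · rw [hlab3, hc2q0]
      · rw [hseg3, seg_swap hlab2 (k := k) (by show (p : ℕ) < k; omega) (by show (p : ℕ) + 1 < k; omega)]

variable (hρ : IsRankFunction n ρ) (hR : IsRelLabeling ρ Λ (· ≤ ·))

theorem bubble [Fintype P] (hC : IsCLabeling Λ) (hS : IsSLabeling Λ) (y : P) (b : L)
    (hb : b ∈ Ix Λ hρ hR y) :
    ∃ x : P, x ⋖ y ∧ Ix Λ hρ hR x = (Ix Λ hρ hR y).erase b := by
  set k := ρ y with hkdef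
  set cy := canon Λ hρ hR y with hcydef
  have hkn : k ≤ n := hρ.2.2.2 y
  have hb' : b ∈ seg (Λ cy) 0 k := hb
  obtain ⟨j, hj, hjb⟩ := Multiset.mem_map.1 hb'
  rw [Finset.mem_val, Finset.mem_filter] at hj
  classical
  set T := Finset.univ.filter (fun i : Fin n => (i : ℕ) < k ∧ Λ cy i = b) with hT
  have hTne : T.Nonempty := by
    refine ⟨j, ?_⟩
    simp only [hT, Finset.mem_filter, Finset.mem_univ, true_and]
    exact ⟨hj.2.2, hjb⟩
  set p := T.max' hTne with hpdef
  have hpmem := T.max'_mem hTne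
  simp only [hT, Finset.mem_filter, Finset.mem_univ, true_and] at hpmem
  have hstrict : ∀ q : Fin n, p < q → (q : ℕ) < k → Λ cy p < Λ cy q := by
    intro q hq hqk
    have hle : Λ cy p ≤ Λ cy q := canon_sorted Λ hρ hR y p q hq.le hqk
    rcases lt_or_eq_of_le hle with h | h
    · exact h
    · exfalso
      have hqT : q ∈ T := by
        simp only [hT, Finset.mem_filter, Finset.mem_univ, true_and]
        exact ⟨hqk, by rw [← h, hpmem.2]⟩
      have := T.le_max' q hqT
      rw [← hpdef] at this
      exact absurd hq (not_lt.2 this)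
  obtain ⟨c', hk1, hfix, hlab, hseg⟩ :=
    bubble_chain Λ hS (k - 1 - (p : ℕ)) cy k hkn p hpmem.1 le_rfl hstrict
  have hk1' : k - 1 < n + 1 := by omega
  set x := c'.1 ⟨k - 1, hk1'⟩ with hxdef
  have hkpos : 0 < k := by omega
  have hcov : x ⋖ y := by
    have hcv := chain_cov c' ⟨k - 1, hk1⟩
    have hcs : (⟨k - 1, hk1⟩ : Fin n).castSucc = ⟨k - 1, hk1'⟩ := Fin.ext rfl
    have hsc : (⟨k - 1, hk1⟩ : Fin n).succ = ⟨k, by omega⟩ := Fin.ext (by simp [Fin.val_succ]; omega)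
    rw [hcs, hsc] at hcv
    have hy : c'.1 ⟨k, by omega⟩ = y := by
      rw [hfix ⟨k, by omega⟩ (by show k ≤ k; omega)]
      exact canon_through Λ hρ hR y ⟨k, by omega⟩ rfl
    rw [hy] at hcv
    exact hcv
  have hIxx : Ix Λ hρ hR x = seg (Λ c') 0 (k - 1) := by
    have := seg_eq_Ix Λ hρ hR hC hS c' ⟨k - 1, hk1'⟩
    exact this.symm
  have hsplit : seg (Λ c') 0 k = Λ c' ⟨k - 1, hk1⟩ ::ₘ seg (Λ c') 0 (k - 1) := by
    have h1 : k - 1 + 1 = k := by omega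
    conv_lhs => rw [← h1]
    exact seg_succ (Nat.zero_le _) hk1
  have hIxy : Ix Λ hρ hR y = b ::ₘ Ix Λ hρ hR x := by
    show seg (Λ cy) 0 k = _
    rw [← hseg, hsplit, hlab, hpmem.2, hIxx]
  rw [hIxy]
  exact ⟨x, hcov, (Multiset.erase_cons_head b _).symm⟩

theorem Ix_surj [Fintype P] (hC : IsCLabeling Λ) (hS : IsSLabeling Λ) :
    ∀ M : Multiset L, M ≤ Ix Λ hρ hR (⊤ : P) → ∃ x, Ix Λ hρ hR x = M := by
  suffices H : ∀ (d : ℕ) (M : Multiset L), M ≤ Ix Λ hρ hR (⊤ : P) →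
      n - Multiset.card M ≤ d → ∃ x, Ix Λ hρ hR x = M by
    exact fun M hM => H n M hM (by omega)
  intro d
  induction d with
  | zero =>
    intro M hM hd
    have hcA : Multiset.card (Ix Λ hρ hR (⊤ : P)) = n := Ix_card_top Λ hρ hR
    have : M = Ix Λ hρ hR (⊤ : P) := Multiset.eq_of_le_of_card_le hM (by omega)
    exact ⟨⊤, this.symm⟩
  | succ d ih =>
    intro M hM hd
    rcases eq_or_lt_of_le hM with heq | hlt
    · exact ⟨⊤, heq.symm⟩
    · obtain ⟨b, hble⟩ := Multiset.lt_iff_cons_le.1 hlt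
      have hcard := Multiset.card_le_card hble
      rw [Multiset.card_cons, Ix_card_top Λ hρ hR] at hcard
      obtain ⟨y, hy⟩ := ih (b ::ₘ M) hble (by rw [Multiset.card_cons]; omega)
      have hbm : b ∈ Ix Λ hρ hR y := by rw [hy]; exact Multiset.mem_cons_self _ _
      obtain ⟨x, -, hx⟩ := bubble Λ hρ hR hC hS y b hbm
      refine ⟨x, ?_⟩
      rw [hx, hy, Multiset.erase_cons_head]

theorem le_of_Ix_le [Fintype P] (hC : IsCLabeling Λ) (hS : IsSLabeling Λ) :
    ∀ x y : P, Ix Λ hρ hR x ≤ Ix Λ hρ hR y → x ≤ y := by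
  suffices H : ∀ (d : ℕ) (x y : P), ρ y - ρ x ≤ d → Ix Λ hρ hR x ≤ Ix Λ hρ hR y → x ≤ y by
    exact fun x y h => H n x y (by have := hρ.2.2.2 y; omega) h
  intro d
  induction d with
  | zero =>
    intro x y hd h
    have h1 := Multiset.card_le_card h
    rw [Ix_card, Ix_card] at h1
    have : Ix Λ hρ hR x = Ix Λ hρ hR y := Multiset.eq_of_le_of_card_le h (by rw [Ix_card, Ix_card]; omega)
    rw [Ix_inj Λ hρ hR hC hS this]
  | succ d ih =>
    intro x y hd h
    rcases eq_or_lt_of_le h with heq | hlt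
    · rw [Ix_inj Λ hρ hR hC hS heq]
    · obtain ⟨b, hble⟩ := Multiset.lt_iff_cons_le.1 hlt
      have hbm : b ∈ Ix Λ hρ hR y := Multiset.mem_of_le hble (Multiset.mem_cons_self _ _)
      obtain ⟨x', hcov, hx'⟩ := bubble Λ hρ hR hC hS y b hbm
      have hxx' : Ix Λ hρ hR x ≤ Ix Λ hρ hR x' := by
        rw [hx', Multiset.le_iff_count]
        intro v
        rw [Multiset.le_iff_count] at hble
        rcases eq_or_ne v b with rfl | hvb
        · have := hble v
          rw [Multiset.count_cons_self] at this
          rw [Multiset.count_erase_self]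
          omega
        · have := hble v
          rw [Multiset.count_cons_of_ne hvb] at this
          rw [Multiset.count_erase_of_ne hvb]
          exact this
      have hcards : ρ x' + 1 = ρ y := by
        have h1 : Multiset.card (Ix Λ hρ hR x') = Multiset.card (Ix Λ hρ hR y) - 1 := by
          rw [hx', Multiset.card_erase_of_mem hbm, Nat.pred_eq_sub_one]
        rw [Ix_card, Ix_card] at h1
        have h2 : 0 < Multiset.card (Ix Λ hρ hR y) := Multiset.card_pos_iff_exists_mem.2 ⟨b, hbm⟩
        rw [Ix_card] at h2
        omega
      have hrx : ρ x ≤ ρ x' := by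
        have := Multiset.card_le_card hxx'
        rwa [Ix_card, Ix_card] at this
      exact le_trans (ih x x' (by omega) hxx') hcov.le
end RSFlag
namespace RSFlag

section Package

variable {L : Type*} [LinearOrder L]

theorem count_sum_replicate {β : Type*} [DecidableEq β] {k : ℕ} (w : Fin k → β)
    (hw : Function.Injective w) (a : Fin k → ℕ) (j : Fin k) :
    Multiset.count (w j) (∑ i : Fin k, Multiset.replicate (a i) (w i)) = a j := by
  rw [Multiset.count_sum']
  rw [Finset.sum_eq_single j]
  · rw [Multiset.count_replicate, if_pos rfl]
  · intro b _ hbj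
    rw [Multiset.count_replicate, if_neg (fun h => hbj (hw h))]
  · intro h
    exact absurd (Finset.mem_univ j) h

theorem count_sum_replicate_notmem {β : Type*} [DecidableEq β] {k : ℕ} (w : Fin k → β)
    (a : Fin k → ℕ) (v : β) (hv : ∀ i, w i ≠ v) :
    Multiset.count v (∑ i : Fin k, Multiset.replicate (a i) (w i)) = 0 := by
  rw [Multiset.count_sum']
  exact Finset.sum_eq_zero fun i _ => by
    rw [Multiset.count_replicate, if_neg (hv i)]

theorem multiset_package (A : Multiset L) :
    ∃ l : List ℕ, l.Pairwise (· ≥ ·) ∧ (∀ m ∈ l, 0 < m) ∧ l.sum = Multiset.card A ∧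
      ∃ E : {M : Multiset L // M ≤ A} ≃o (∀ i : Fin l.length, Fin (l.get i + 1)),
        ∀ M : {M : Multiset L // M ≤ A}, ∑ i, ((E M i : ℕ)) = Multiset.card M.1 := by
  classical
  set k := A.toFinset.card with hk
  set eF : Fin k ≃ {v // v ∈ A.toFinset} := A.toFinset.equivFin.symm with heF
  set g : Fin k → ℕ := fun i => A.count (eF i : L) with hg
  set σ : Equiv.Perm (Fin k) := Tuple.sort (fun i => OrderDual.toDual (g i)) with hσ
  set w : Fin k → L := fun i => (eF (σ i) : L) with hw
  have hanti : ∀ i j : Fin k, i ≤ j → g (σ j) ≤ g (σ i) := by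
    intro i j hij
    exact Tuple.monotone_sort (fun i => OrderDual.toDual (g i)) hij
  have hwinj : Function.Injective w := fun a b h =>
    σ.injective (eF.injective (Subtype.coe_injective h))
  have hwsurj : ∀ v ∈ A.toFinset, ∃ j : Fin k, w j = v := by
    intro v hv
    exact ⟨σ.symm (eF.symm ⟨v, hv⟩), by simp [hw]⟩
  have hwcount : ∀ i : Fin k, A.count (w i) = g (σ i) := fun i => rfl
  refine ⟨List.ofFn (fun i => g (σ i)), ?_, ?_, ?_, ?_⟩
  · rw [List.pairwise_ofFn]
    intro i j hij
    exact hanti i j hij.le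
  · intro m hm
    rw [List.mem_ofFn] at hm
    obtain ⟨i, rfl⟩ := hm
    exact Multiset.count_pos.2 (Multiset.mem_toFinset.1 (eF (σ i)).2)
  · rw [List.sum_ofFn, Equiv.sum_comp σ g]
    calc ∑ i : Fin k, g i = ∑ i : Fin k, A.count ((eF i) : L) := rfl
      _ = ∑ v : {v // v ∈ A.toFinset}, A.count (v : L) := Equiv.sum_comp eF (fun v => A.count (v : L))
      _ = ∑ v ∈ A.toFinset, A.count v := Finset.sum_coe_sort A.toFinset (fun v => A.count v)
      _ = Multiset.card A := Multiset.toFinset_sum_count_eq A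
  · set l := List.ofFn (fun i => g (σ i)) with hl
    have hlen : l.length = k := List.length_ofFn
    set fc : Fin l.length ≃ Fin k := finCongr hlen with hfc
    have hget : ∀ i : Fin l.length, l.get i = g (σ (fc i)) := by
      intro i
      exact List.get_ofFn (fun i => g (σ i)) i
    have hcountA : ∀ i : Fin l.length, A.count (w (fc i)) = l.get i := by
      intro i
      rw [hget i]
    -- forward map
    set F : {M : Multiset L // M ≤ A} → (∀ i : Fin l.length, Fin (l.get i + 1)) :=
      fun M i => ⟨M.1.count (w (fc i)), by
        have h1 := Multiset.le_iff_count.1 M.2 (w (fc i))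
        have h2 := hcountA i
        omega⟩ with hF
    -- inverse map ingredients
    set GM : (∀ i : Fin l.length, Fin (l.get i + 1)) → Multiset L :=
      fun T => ∑ j : Fin k, Multiset.replicate ((T (fc.symm j) : ℕ)) (w j) with hGM
    have hGMc : ∀ T (j : Fin k), (GM T).count (w j) = (T (fc.symm j) : ℕ) := by
      intro T j
      exact count_sum_replicate w hwinj _ j
    have hGMc0 : ∀ T v, (∀ j : Fin k, w j ≠ v) → (GM T).count v = 0 := by
      intro T v hv
      exact count_sum_replicate_notmem w _ v hv
    have hvA0 : ∀ v : L, (∀ j : Fin k, w j ≠ v) → A.count v = 0 := by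
      intro v hv
      by_contra hc
      have hvmem : v ∈ A.toFinset := Multiset.mem_toFinset.2 (by
        exact Multiset.count_pos.1 (Nat.pos_of_ne_zero hc))
      obtain ⟨j, hj⟩ := hwsurj v hvmem
      exact hv j hj
    have hGle : ∀ T, GM T ≤ A := by
      intro T
      rw [Multiset.le_iff_count]
      intro v
      by_cases hv : ∃ j : Fin k, w j = v
      · obtain ⟨j, rfl⟩ := hv
        rw [hGMc]
        have hb : (T (fc.symm j) : ℕ) ≤ l.get (fc.symm j) := by
          have := (T (fc.symm j)).2
          omega
        have := hcountA (fc.symm j)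
        simp only [Equiv.apply_symm_apply] at this
        omega
      · push_neg at hv
        rw [hGMc0 T v hv]
        exact Nat.zero_le _
    set G : (∀ i : Fin l.length, Fin (l.get i + 1)) → {M : Multiset L // M ≤ A} :=
      fun T => ⟨GM T, hGle T⟩ with hG
    have hGF : ∀ M, G (F M) = M := by
      intro M
      refine Subtype.ext ?_
      refine Multiset.ext.2 ?_
      intro v
      by_cases hv : ∃ j : Fin k, w j = v
      · obtain ⟨j, rfl⟩ := hv
        show (GM (F M)).count (w j) = _
        rw [hGMc]
        show M.1.count (w (fc (fc.symm j))) = M.1.count (w j)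
        rw [Equiv.apply_symm_apply]
      · push_neg at hv
        show (GM (F M)).count v = M.1.count v
        rw [hGMc0 _ v hv]
        have h1 := Multiset.le_iff_count.1 M.2 v
        have h2 := hvA0 v hv
        omega
    have hFG : ∀ T, F (G T) = T := by
      intro T
      funext i
      refine Fin.ext ?_
      show (GM T).count (w (fc i)) = (T i : ℕ)
      rw [hGMc T (fc i), Equiv.symm_apply_apply]
    have hrel : ∀ M M', F M ≤ F M' ↔ M ≤ M' := by
      intro M M'
      constructor
      · intro h
        show M.1 ≤ M'.1
        rw [Multiset.le_iff_count]
        intro v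
        by_cases hv : ∃ j : Fin k, w j = v
        · obtain ⟨j, rfl⟩ := hv
          have := h (fc.symm j)
          rw [Fin.le_def] at this
          show M.1.count (w j) ≤ M'.1.count (w j)
          have hj : w (fc (fc.symm j)) = w j := by rw [Equiv.apply_symm_apply]
          rw [← hj]
          exact this
        · push_neg at hv
          have h1 := Multiset.le_iff_count.1 M.2 v
          have h2 := hvA0 v hv
          omega
      · intro h i
        rw [Fin.le_def]
        exact Multiset.le_iff_count.1 h (w (fc i))
    refine ⟨⟨⟨F, G, hGF, hFG⟩, fun {M M'} => hrel M M'⟩, ?_⟩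
    intro M
    show ∑ i : Fin l.length, (F M i : ℕ) = Multiset.card M.1
    calc ∑ i : Fin l.length, (F M i : ℕ)
          = ∑ i : Fin l.length, M.1.count (w (fc i)) := rfl
        _ = ∑ j : Fin k, M.1.count (w j) := Equiv.sum_comp fc (fun j => M.1.count (w j))
        _ = ∑ j : Fin k, M.1.count ((eF (σ j)) : L) := rfl
        _ = ∑ j : Fin k, M.1.count ((eF j) : L) := Equiv.sum_comp σ (fun j => M.1.count ((eF j) : L))
        _ = ∑ v : {v // v ∈ A.toFinset}, M.1.count (v : L) := Equiv.sum_comp eF (fun v => M.1.count (v : L))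
        _ = ∑ v ∈ A.toFinset, M.1.count v := Finset.sum_coe_sort A.toFinset (fun v => M.1.count v)
        _ = ∑ v ∈ M.1.toFinset, M.1.count v := by
            refine (Finset.sum_subset ?_ ?_).symm
            · exact Multiset.toFinset_subset.2 (Multiset.subset_of_le M.2)
            · intro v _ hv
              exact Multiset.count_eq_zero_of_notMem (fun hm => hv (Multiset.mem_toFinset.2 hm))
        _ = Multiset.card M.1 := Multiset.toFinset_sum_count_eq M.1

end Package

variable {P : Type*} [PartialOrder P] [BoundedOrder P] {n : ℕ}
variable {L : Type*} [LinearOrder L]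
variable {ρ : P → ℕ}
variable (Λ : MC P n → Fin n → L) (hρ : IsRankFunction n ρ) (hR : IsRelLabeling ρ Λ (· ≤ ·))

noncomputable def IxIso [Fintype P] (hC : IsCLabeling Λ) (hS : IsSLabeling Λ) :
    P ≃o {M : Multiset L // M ≤ Ix Λ hρ hR (⊤ : P)} where
  toFun := fun x => ⟨Ix Λ hρ hR x, Ix_mono Λ hρ hR hC hS le_top⟩
  invFun := fun M => (Ix_surj Λ hρ hR hC hS M.1 M.2).choose
  left_inv := by
    intro x
    have h := (Ix_surj Λ hρ hR hC hS (Ix Λ hρ hR x) (Ix_mono Λ hρ hR hC hS le_top)).choose_spec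
    exact Ix_inj Λ hρ hR hC hS h
  right_inv := by
    intro M
    have h := (Ix_surj Λ hρ hR hC hS M.1 M.2).choose_spec
    exact Subtype.ext h
  map_rel_iff' := by
    intro x y
    constructor
    · intro h
      exact le_of_Ix_le Λ hρ hR hC hS x y h
    · intro h
      exact Ix_mono Λ hρ hR hC hS h

end RSFlag
namespace RSFlag

open MvPolynomial

/-! ### Telescoping sums -/

theorem teleSumP {d : ℕ} (f : Fin (d + 1) → ℕ) (hf : Monotone f) :
    ∀ i : Fin (d + 1), ∑ j ∈ Finset.univ.filter (fun j : Fin d => (j : ℕ) < (i : ℕ)),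
      (f j.succ - f j.castSucc) = f i - f 0 := by
  intro i
  induction i using Fin.induction with
  | zero =>
    rw [Finset.filter_false_of_mem (fun j _ => by simp)]
    simp
  | succ i ih =>
    have hins : Finset.univ.filter (fun j : Fin d => (j : ℕ) < ((i.succ : Fin (d + 1)) : ℕ))
        = insert i (Finset.univ.filter (fun j : Fin d => (j : ℕ) < ((i.castSucc : Fin (d + 1)) : ℕ))) := by
      ext j
      simp only [Finset.mem_filter, Finset.mem_univ, true_and, Finset.mem_insert, Fin.ext_iff,
        Fin.val_succ, Fin.coe_castSucc]
      omega
    rw [hins, Finset.sum_insert (by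
      simp only [Finset.mem_filter, Finset.mem_univ, true_and, Fin.coe_castSucc]
      omega), ih]
    have e1 : f 0 ≤ f i.castSucc := hf (Fin.zero_le _)
    have e2 : f i.castSucc ≤ f i.succ := hf (Fin.castSucc_lt_succ : i.castSucc < i.succ).le
    omega

theorem teleSum {d : ℕ} (f : Fin (d + 1) → ℕ) (hf : Monotone f) :
    ∑ i : Fin d, (f i.succ - f i.castSucc) = f (Fin.last d) - f 0 := by
  have h := teleSumP f hf (Fin.last d)
  rw [← h]
  refine Finset.sum_congr ?_ (fun _ _ => rfl)
  ext j
  simp only [Finset.mem_filter, Finset.mem_univ, true_and, Fin.val_last]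
  exact ⟨fun _ => j.2, fun _ => trivial⟩

theorem sum_univ_count {β : Type*} [Fintype β] [DecidableEq β] (s : Multiset β) :
    ∑ j : β, s.count j = Multiset.card s := by
  rw [← Multiset.toFinset_sum_count_eq s]
  exact (Finset.sum_subset (Finset.subset_univ _) (fun x _ hx =>
    Multiset.count_eq_zero_of_notMem (fun hm => hx (Multiset.mem_toFinset.2 hm)))).symm

theorem prod_map_X {d : ℕ} (s : Multiset (Fin d)) :
    (s.map (X : Fin d → MvPolynomial (Fin d) ℚ)).prod
      = ∏ i : Fin d, (X i : MvPolynomial (Fin d) ℚ) ^ s.count i := by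
  classical
  induction s using Multiset.induction_on with
  | empty => simp
  | cons a s ih =>
    rw [Multiset.map_cons, Multiset.prod_cons, ih]
    have hterm : ∀ i : Fin d, (X i : MvPolynomial (Fin d) ℚ) ^ (a ::ₘ s).count i
        = (X i) ^ s.count i * (if i = a then X i else 1) := by
      intro i
      rw [Multiset.count_cons, pow_add]
      congr 1
      split_ifs with h
      · rw [pow_one]
      · rw [pow_zero]
    rw [Finset.prod_congr rfl (fun i _ => hterm i), Finset.prod_mul_distrib,
      Finset.prod_ite_eq' Finset.univ a (fun i => (X i : MvPolynomial (Fin d) ℚ))]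
    simp [mul_comm]

/-! ### Multichains in a single chain give `hsymm` -/

def TFset (d m : ℕ) : Finset (Fin (d + 1) → Fin (m + 1)) :=
  Finset.univ.filter fun t => t 0 = 0 ∧ t (Fin.last d) = Fin.last m ∧
    ∀ i : Fin d, t i.castSucc ≤ t i.succ

theorem count_sum_replicate_id {k : ℕ} (a : Fin k → ℕ) (j : Fin k) :
    Multiset.count j (∑ i : Fin k, Multiset.replicate (a i) i) = a j :=
  count_sum_replicate (fun x => x) (fun _ _ h => h) a j

theorem filter_succ_insert {d : ℕ} (j0 : Fin d) :
    Finset.univ.filter (fun j : Fin d => (j : ℕ) < ((j0.succ : Fin (d + 1)) : ℕ))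
      = insert j0 (Finset.univ.filter (fun j : Fin d => (j : ℕ) < ((j0.castSucc : Fin (d + 1)) : ℕ))) := by
  ext j
  simp only [Finset.mem_filter, Finset.mem_univ, true_and, Finset.mem_insert, Fin.ext_iff,
    Fin.val_succ, Fin.coe_castSucc]
  omega

theorem notmem_filter_castSucc {d : ℕ} (j0 : Fin d) :
    j0 ∉ Finset.univ.filter (fun j : Fin d => (j : ℕ) < ((j0.castSucc : Fin (d + 1)) : ℕ)) := by
  simp only [Finset.mem_filter, Finset.mem_univ, true_and, Fin.coe_castSucc]
  omega

theorem chain_sum_eq_hsymm (d m : ℕ) :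
    ∑ t ∈ TFset d m, ∏ i : Fin d,
        (X i : MvPolynomial (Fin d) ℚ) ^ ((t i.succ : ℕ) - (t i.castSucc : ℕ))
      = hsymm (Fin d) ℚ m := by
  classical
  rw [hsymm]
  have hmono : ∀ t ∈ TFset d m, Monotone (fun i : Fin (d + 1) => ((t i : ℕ))) := by
    intro t ht
    rw [TFset, Finset.mem_filter] at ht
    have h1 : Monotone t := Fin.monotone_iff_le_succ.2 ht.2.2.2
    intro a b hab
    exact h1 hab
  have hcard : ∀ t ∈ TFset d m,
      Multiset.card (∑ j : Fin d, Multiset.replicate ((t j.succ : ℕ) - (t j.castSucc : ℕ)) j) = m := by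
    intro t ht
    rw [← sum_univ_count, Finset.sum_congr rfl (fun j _ => count_sum_replicate_id _ j),
      teleSum _ (hmono t ht)]
    rw [TFset, Finset.mem_filter] at ht
    rw [ht.2.1, ht.2.2.1]
    simp
  have hbound : ∀ (s : Sym (Fin d) m) (i : Fin (d + 1)),
      (∑ j ∈ Finset.univ.filter (fun j : Fin d => (j : ℕ) < (i : ℕ)), s.1.count j) < m + 1 := by
    intro s i
    have h1 : ∑ j ∈ Finset.univ.filter (fun j : Fin d => (j : ℕ) < (i : ℕ)), s.1.count j
        ≤ ∑ j : Fin d, s.1.count j := Finset.sum_le_sum_of_subset (Finset.subset_univ _)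
    rw [sum_univ_count, s.2] at h1
    omega
  refine Finset.sum_bij' (i := fun t ht =>
      (⟨∑ j : Fin d, Multiset.replicate ((t j.succ : ℕ) - (t j.castSucc : ℕ)) j,
        hcard t ht⟩ : Sym (Fin d) m))
    (j := fun s _ => fun i : Fin (d + 1) =>
      (⟨∑ j ∈ Finset.univ.filter (fun j : Fin d => (j : ℕ) < (i : ℕ)), s.1.count j,
        hbound s i⟩ : Fin (m + 1)))
    ?_ ?_ ?_ ?_ ?_
  · intro t ht
    exact Finset.mem_univ _
  · -- j-map lands in TFset
    intro s hs
    rw [TFset, Finset.mem_filter]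
    refine ⟨Finset.mem_univ _, ?_, ?_, ?_⟩
    · refine Fin.ext ?_
      show (∑ j ∈ Finset.univ.filter (fun j : Fin d => (j : ℕ) < ((0 : Fin (d + 1)) : ℕ)),
        s.1.count j) = (0 : ℕ)
      rw [Finset.filter_false_of_mem (fun j _ => by simp)]
      simp
    · refine Fin.ext ?_
      show (∑ j ∈ Finset.univ.filter (fun j : Fin d => (j : ℕ) < ((Fin.last d : Fin (d + 1)) : ℕ)),
        s.1.count j) = (m : ℕ)
      have hfull : Finset.univ.filter (fun j : Fin d => (j : ℕ) < ((Fin.last d : Fin (d + 1)) : ℕ))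
          = Finset.univ := by
        ext j
        simp only [Finset.mem_filter, Finset.mem_univ, true_and, Fin.val_last]
        exact ⟨fun _ => trivial, fun _ => j.2⟩
      rw [hfull, sum_univ_count, s.2]
    · intro i
      rw [Fin.le_def]
      show (∑ j ∈ Finset.univ.filter (fun j : Fin d => (j : ℕ) < ((i.castSucc : Fin (d + 1)) : ℕ)),
          s.1.count j)
        ≤ (∑ j ∈ Finset.univ.filter (fun j : Fin d => (j : ℕ) < ((i.succ : Fin (d + 1)) : ℕ)),
          s.1.count j)
      refine Finset.sum_le_sum_of_subset ?_
      intro j hj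
      simp only [Finset.mem_filter, Finset.mem_univ, true_and, Fin.coe_castSucc, Fin.val_succ] at hj ⊢
      omega
  · -- left inverse : j (i t) = t
    intro t ht
    funext i
    refine Fin.ext ?_
    have h1 : ∀ j : Fin d, Multiset.count j
        (∑ j' : Fin d, Multiset.replicate ((t j'.succ : ℕ) - (t j'.castSucc : ℕ)) j')
        = (t j.succ : ℕ) - (t j.castSucc : ℕ) := fun j => count_sum_replicate_id _ j
    show (∑ j ∈ Finset.univ.filter (fun j : Fin d => (j : ℕ) < (i : ℕ)),
      Multiset.count j (∑ j' : Fin d, Multiset.replicate ((t j'.succ : ℕ) - (t j'.castSucc : ℕ)) j'))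
      = (t i : ℕ)
    rw [Finset.sum_congr rfl (fun j _ => h1 j)]
    have h2 := teleSumP (fun i : Fin (d + 1) => ((t i : ℕ))) (hmono t ht) i
    rw [h2]
    rw [TFset, Finset.mem_filter] at ht
    rw [ht.2.1]
    simp
  · -- right inverse : i (j s) = s
    intro s hs
    refine Subtype.ext ?_
    refine Multiset.ext.2 ?_
    intro j0
    have hd : (∑ j ∈ Finset.univ.filter (fun j : Fin d => (j : ℕ) < ((j0.succ : Fin (d + 1)) : ℕ)),
          s.1.count j)
        - (∑ j ∈ Finset.univ.filter (fun j : Fin d => (j : ℕ) < ((j0.castSucc : Fin (d + 1)) : ℕ)),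
          s.1.count j) = s.1.count j0 := by
      rw [filter_succ_insert j0, Finset.sum_insert (notmem_filter_castSucc j0)]
      omega
    show Multiset.count j0 (∑ j : Fin d, Multiset.replicate
      ((∑ j' ∈ Finset.univ.filter (fun j' : Fin d => (j' : ℕ) < ((j.succ : Fin (d + 1)) : ℕ)),
          s.1.count j')
        - (∑ j' ∈ Finset.univ.filter (fun j' : Fin d => (j' : ℕ) < ((j.castSucc : Fin (d + 1)) : ℕ)),
          s.1.count j')) j) = s.1.count j0
    rw [count_sum_replicate_id]
    exact hd
  · -- summand equality
    intro t ht
    rw [prod_map_X]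
    refine Finset.prod_congr rfl ?_
    intro i _
    congr 1
    exact (count_sum_replicate_id (fun j => (t j.succ : ℕ) - (t j.castSucc : ℕ)) i).symm

end RSFlag
namespace RSFlag

open MvPolynomial

theorem flag_eq {P : Type*} [Fintype P] [PartialOrder P] [BoundedOrder P] (ρ : P → ℕ)
    (l : List ℕ) (E : P ≃o (∀ i : Fin l.length, Fin (l.get i + 1)))
    (hrank : ∀ x : P, ρ x = ∑ i, ((E x i : ℕ))) (d : ℕ) :
    flagPoly ρ d = (l.map (hsymm (Fin d) ℚ)).prod := by
  classical
  have hrhs : (l.map (hsymm (Fin d) ℚ)).prod = ∏ j : Fin l.length, hsymm (Fin d) ℚ (l.get j) := by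
    conv_lhs => rw [← List.ofFn_get l]
    rw [List.map_ofFn, List.prod_ofFn]
    rfl
  rw [hrhs]
  rw [Finset.prod_congr rfl (fun j (_ : j ∈ Finset.univ) => (chain_sum_eq_hsymm d (l.get j)).symm),
    Finset.prod_univ_sum]
  have hset : {c : Fin (d + 1) → P | c 0 = ⊥ ∧ c (Fin.last d) = ⊤ ∧ Monotone c}.Finite :=
    Set.toFinite _
  rw [flagPoly, ← Set.Finite.coe_toFinset hset, finsum_mem_coe_finset]
  refine Finset.sum_bij' (i := fun c _ => fun j => fun i : Fin (d + 1) => E (c i) j)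
    (j := fun T _ => fun i : Fin (d + 1) => E.symm (fun j => T j i)) ?_ ?_ ?_ ?_ ?_
  · -- image in piFinset
    intro c hc
    rw [Set.Finite.mem_toFinset] at hc
    obtain ⟨hc0, hcl, hcm⟩ := hc
    rw [Fintype.mem_piFinset]
    intro j
    rw [TFset, Finset.mem_filter]
    refine ⟨Finset.mem_univ _, ?_, ?_, ?_⟩
    · show E (c 0) j = 0
      rw [hc0, OrderIso.map_bot E]
      rfl
    · show E (c (Fin.last d)) j = Fin.last (l.get j)
      rw [hcl, OrderIso.map_top E]
      rfl
    · intro i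
      exact E.monotone (hcm (Fin.castSucc_le_succ i)) j
  · -- preimage in multichain set
    intro T hT
    rw [Fintype.mem_piFinset] at hT
    have hT' : ∀ j, T j 0 = 0 ∧ T j (Fin.last d) = Fin.last (l.get j) ∧
        ∀ i : Fin d, T j i.castSucc ≤ T j i.succ := by
      intro j
      have := hT j
      rw [TFset, Finset.mem_filter] at this
      exact this.2
    rw [Set.Finite.mem_toFinset]
    refine ⟨?_, ?_, ?_⟩
    · show E.symm (fun j => T j 0) = ⊥
      have h1 : (fun j => T j 0) = (⊥ : ∀ i : Fin l.length, Fin (l.get i + 1)) := by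
        funext j
        exact (hT' j).1
      rw [h1, ← OrderIso.map_bot E, OrderIso.symm_apply_apply E _]
    · show E.symm (fun j => T j (Fin.last d)) = ⊤
      have h1 : (fun j => T j (Fin.last d)) = (⊤ : ∀ i : Fin l.length, Fin (l.get i + 1)) := by
        funext j
        exact (hT' j).2.1
      rw [h1, ← OrderIso.map_top E, OrderIso.symm_apply_apply E _]
    · intro a b hab
      refine E.symm.monotone ?_
      intro j
      exact (Fin.monotone_iff_le_succ.2 (hT' j).2.2) hab
  · -- left inverse
    intro c hc
    funext i
    exact E.symm_apply_apply (c i)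
  · -- right inverse
    intro T hT
    funext j i
    exact congrFun (E.apply_symm_apply (fun j => T j i)) j
  · -- summand equality
    intro c hc
    rw [Set.Finite.mem_toFinset] at hc
    obtain ⟨hc0, hcl, hcm⟩ := hc
    have hmono : ∀ (i : Fin d) (j : Fin l.length),
        ((E (c i.castSucc) j : ℕ)) ≤ ((E (c i.succ) j : ℕ)) := by
      intro i j
      have h1 : E (c i.castSucc) ≤ E (c i.succ) := E.monotone (hcm (Fin.castSucc_le_succ i))
      exact h1 j
    have hdiff : ∀ i : Fin d, ρ (c i.succ) - ρ (c i.castSucc)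
        = ∑ j, (((E (c i.succ) j : ℕ)) - ((E (c i.castSucc) j : ℕ))) := by
      intro i
      rw [hrank, hrank]
      have hadd : ∑ j, (((E (c i.succ) j : ℕ)) - ((E (c i.castSucc) j : ℕ)))
          + ∑ j, ((E (c i.castSucc) j : ℕ)) = ∑ j, ((E (c i.succ) j : ℕ)) := by
        rw [← Finset.sum_add_distrib]
        refine Finset.sum_congr rfl fun j _ => ?_
        have := hmono i j
        omega
      omega
    calc ∏ i : Fin d, (X i : MvPolynomial (Fin d) ℚ) ^ (ρ (c i.succ) - ρ (c i.castSucc))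
        = ∏ i : Fin d, ∏ j : Fin l.length,
            (X i : MvPolynomial (Fin d) ℚ) ^ (((E (c i.succ) j : ℕ)) - ((E (c i.castSucc) j : ℕ))) := by
          refine Finset.prod_congr rfl fun i _ => ?_
          rw [hdiff i, ← Finset.prod_pow_eq_pow_sum]
      _ = ∏ j : Fin l.length, ∏ i : Fin d,
            (X i : MvPolynomial (Fin d) ℚ) ^ (((E (c i.succ) j : ℕ)) - ((E (c i.castSucc) j : ℕ))) :=
          Finset.prod_comm

end RSFlag
/-- **Simion–Stanley Theorem 4.4(a).** Let `P` be a flag-symmetric finite ranked poset of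
rank `n` with an `RS`-labeling `Λ` (a `C`-labeling which is both an `R`-labeling and an
`S`-labeling).  Then `F_P = h_ν` for some partition `ν` of `n` (below encoded as a sorted
list of positive parts summing to `n`), and `P ≅ C_{ν₁+1} × C_{ν₂+1} × ⋯`. -/
theorem rs_labeling_flag_h_and_product_of_chains
    {P : Type*} [Fintype P] [PartialOrder P] [BoundedOrder P]
    (n : ℕ) (ρ : P → ℕ) (hρ : IsRankFunction n ρ)
    (hflag : ∀ d : ℕ, (flagPoly (P := P) ρ d).IsSymmetric)
    {L : Type*} [LinearOrder L]
    (Λ : {c : Fin (n + 1) → P // IsMaxChainOf n c} → Fin n → L)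
    (hC : IsCLabeling Λ)
    (hR : IsRelLabeling ρ Λ (· ≤ ·))
    (hS : IsSLabeling Λ) :
    ∃ l : List ℕ, l.Pairwise (· ≥ ·) ∧ (∀ m ∈ l, 0 < m) ∧ l.sum = n ∧
      (∀ d : ℕ, flagPoly (P := P) ρ d = (l.map (hsymm (Fin d) ℚ)).prod) ∧
      Nonempty (P ≃o ∀ i : Fin l.length, Fin (l.get i + 1)) := by
  classical
  obtain ⟨l, hsorted, hpos, hsum, E0, hE0⟩ :=
    RSFlag.multiset_package (RSFlag.Ix Λ hρ hR (⊤ : P))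
  rw [RSFlag.Ix_card_top Λ hρ hR] at hsum
  set E : P ≃o (∀ i : Fin l.length, Fin (l.get i + 1)) :=
    (RSFlag.IxIso Λ hρ hR hC hS).trans E0 with hE
  have hrank : ∀ x : P, ρ x = ∑ i, ((E x i : ℕ)) := by
    intro x
    have h1 := hE0 ((RSFlag.IxIso Λ hρ hR hC hS) x)
    have h2 : Multiset.card (((RSFlag.IxIso Λ hρ hR hC hS) x).1) = ρ x :=
      RSFlag.Ix_card Λ hρ hR x
    exact (h1.trans h2).symm
  refine ⟨l, hsorted, hpos, hsum, ?_, ⟨E⟩⟩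
  intro d
  exact RSFlag.flag_eq ρ l E hrank d
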